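/- For any positive integers h and w, the (h,w)-grid graph has a unit-B1-VPG representation: explicitly, with ε = 1/(hw), assigning to each vertex (x,y) the L-shaped path consisting of a vertical unit segment with top endpoint (x, y - ε(x-1)) and a horizontal unit segment extending rightward from the bottom endpoint of the vertical segment, yields a family of paths in which two paths intersect if and only if the corresponding grid vertices are equal or adjacent. -/
import Mathlib


/-- Top `y`-coordinate of the vertical segment of the L-path assigned to grid
vertex `(x,y)`, with `ε = 1/(h·w)`: the top endpoint is `(x, y - ε(x-1))`. -/
noncomputable def gridTop (h w x y : ℤ) : ℝ :=
  (y : ℝ) - (1 / ((h : ℝ) * (w : ℝ))) * ((x : ℝ) - 1)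

/-- The unit L-path of grid vertex `(x,y)`: a vertical unit segment with top endpoint
`(x, y - ε(x-1))`, together with a horizontal unit segment extending rightward from
the bottom endpoint of the vertical segment. -/
noncomputable def gridL (h w x y : ℤ) : Set (ℝ × ℝ) :=
  {p | (p.1 = (x : ℝ) ∧ gridTop h w x y - 1 ≤ p.2 ∧ p.2 ≤ gridTop h w x y) ∨
       (p.2 = gridTop h w x y - 1 ∧ (x : ℝ) ≤ p.1 ∧ p.1 ≤ (x : ℝ) + 1)}

lemma gridTop_sub (h w x₁ y₁ x₂ y₂ : ℤ) :
    gridTop h w x₁ y₁ - gridTop h w x₂ y₂ =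
      ((y₁ : ℝ) - (y₂ : ℝ)) - (1 / ((h : ℝ) * (w : ℝ))) * ((x₁ : ℝ) - (x₂ : ℝ)) := by
  unfold gridTop; ring

/-- for positive `h, w`, the family `{gridL h w x y}` over grid vertices
is a unit-B₁-VPG representation of the (h,w)-grid: two L-paths intersect iff the
corresponding grid vertices are equal or adjacent in the grid. -/
theorem grid_unit_B1_VPG_representation (h w : ℤ) (hh : 0 < h) (hw : 0 < w)
    (x₁ y₁ x₂ y₂ : ℤ)
    (hx₁ : 1 ≤ x₁ ∧ x₁ ≤ h) (hy₁ : 1 ≤ y₁ ∧ y₁ ≤ w)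
    (hx₂ : 1 ≤ x₂ ∧ x₂ ≤ h) (hy₂ : 1 ≤ y₂ ∧ y₂ ≤ w) :
    (gridL h w x₁ y₁ ∩ gridL h w x₂ y₂).Nonempty ↔
      ((x₁ = x₂ ∧ y₁ = y₂) ∨ |x₁ - x₂| + |y₁ - y₂| = 1) := by
  obtain ⟨hx1a, hx1b⟩ := hx₁
  obtain ⟨hy1a, hy1b⟩ := hy₁
  obtain ⟨hx2a, hx2b⟩ := hx₂
  obtain ⟨hy2a, hy2b⟩ := hy₂
  have hH : (1 : ℝ) ≤ (h : ℝ) := by exact_mod_cast hh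
  have hW : (1 : ℝ) ≤ (w : ℝ) := by exact_mod_cast hw
  have hHW : (1 : ℝ) ≤ (h : ℝ) * (w : ℝ) := by nlinarith
  set e : ℝ := 1 / ((h : ℝ) * (w : ℝ)) with he
  have he0 : 0 < e := by rw [he]; positivity
  have he1 : e ≤ 1 := by rw [he]; rw [div_le_one (by linarith)]; linarith
  have heH : e * (h : ℝ) ≤ 1 := by
    rw [he]
    rw [div_mul_eq_mul_div, one_mul, div_le_one (by linarith)]
    nlinarith
  set T1 : ℝ := gridTop h w x₁ y₁ with hT1
  set T2 : ℝ := gridTop h w x₂ y₂ with hT2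
  have hTsub : T1 - T2 = ((y₁ : ℝ) - (y₂ : ℝ)) - e * ((x₁ : ℝ) - (x₂ : ℝ)) := by
    rw [hT1, hT2, gridTop_sub, he]
  constructor
  · rintro ⟨p, hp1, hp2⟩
    rcases hp1 with ⟨hv1, hl1, hr1⟩ | ⟨hh1, hl1, hr1⟩ <;>
      rcases hp2 with ⟨hv2, hl2, hr2⟩ | ⟨hh2, hl2, hr2⟩
    · -- vertical ∩ vertical
      have hxx : x₁ = x₂ := by
        have : (x₁ : ℝ) = (x₂ : ℝ) := by rw [← hv1, ← hv2]
        exact_mod_cast this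
      have hyd : |((y₁ : ℝ) - (y₂ : ℝ))| ≤ 1 := by
        rw [abs_le]
        have hx0 : (x₁ : ℝ) = (x₂ : ℝ) := by exact_mod_cast hxx
        have hE : ((y₁ : ℝ) - (y₂ : ℝ)) = T1 - T2 := by rw [hTsub, hx0]; ring
        constructor <;> linarith
      have hyZ : |y₁ - y₂| ≤ (1 : ℤ) := by
        have : |((y₁ - y₂ : ℤ) : ℝ)| ≤ 1 := by push_cast; exact hyd
        exact_mod_cast this
      rw [Int.abs_eq_natAbs] at hyZ
      rw [Int.abs_eq_natAbs, Int.abs_eq_natAbs]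
      omega
    · -- vertical(1) ∩ horizontal(2)
      have hx12 : x₂ ≤ x₁ ∧ x₁ ≤ x₂ + 1 := by
        constructor
        · exact_mod_cast hv1 ▸ hl2
        · have : (x₁ : ℝ) ≤ (x₂ : ℝ) + 1 := hv1 ▸ hr2
          exact_mod_cast this
      rw [hh2] at hl1 hr1
      have hD1 : T1 - T2 ≤ 0 := by linarith
      have hD2 : -1 ≤ T1 - T2 := by linarith
      rcases eq_or_lt_of_le hx12.1 with hcase | hcase
      · -- x₁ = x₂
        have hx0 : (x₁ : ℝ) = (x₂ : ℝ) := by exact_mod_cast hcase.symm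
        have hE : ((y₁ : ℝ) - (y₂ : ℝ)) = T1 - T2 := by rw [hTsub, hx0]; ring
        have hyd : |((y₁ : ℝ) - (y₂ : ℝ))| ≤ 1 := by
          rw [abs_le]; constructor <;> linarith
        have hyZ : |y₁ - y₂| ≤ (1 : ℤ) := by
          have : |((y₁ - y₂ : ℤ) : ℝ)| ≤ 1 := by push_cast; exact hyd
          exact_mod_cast this
        rw [Int.abs_eq_natAbs] at hyZ
        rw [Int.abs_eq_natAbs, Int.abs_eq_natAbs]
        omega
      · -- x₁ = x₂ + 1, so h ≥ 2, e ≤ 1/2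
        have hx21 : x₁ = x₂ + 1 := by omega
        have hh2' : (2 : ℤ) ≤ h := by omega
        have hHW2 : (2 : ℝ) ≤ (h : ℝ) * (w : ℝ) := by
          have : (2 : ℤ) ≤ h * w := by nlinarith
          exact_mod_cast this
        have he2 : e ≤ 1 / 2 := by
          rw [he]
          apply one_div_le_one_div_of_le <;> linarith
        have hx0 : (x₁ : ℝ) = (x₂ : ℝ) + 1 := by exact_mod_cast hx21
        have hE : ((y₁ : ℝ) - (y₂ : ℝ)) = (T1 - T2) + e := by rw [hTsub, hx0]; ring
        have hyd : |((y₁ : ℝ) - (y₂ : ℝ))| < 1 := by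
          rw [abs_lt]; constructor <;> linarith
        have hyZ : y₁ = y₂ := by
          have : |((y₁ - y₂ : ℤ) : ℝ)| < 1 := by push_cast; exact hyd
          have h2 : |y₁ - y₂| < (1 : ℤ) := by exact_mod_cast this
          rw [Int.abs_eq_natAbs] at h2; omega
        rw [Int.abs_eq_natAbs, Int.abs_eq_natAbs]
        omega
    · -- horizontal(1) ∩ vertical(2)
      have hx12 : x₁ ≤ x₂ ∧ x₂ ≤ x₁ + 1 := by
        constructor
        · exact_mod_cast hv2 ▸ hl1
        · have : (x₂ : ℝ) ≤ (x₁ : ℝ) + 1 := hv2 ▸ hr1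
          exact_mod_cast this
      rw [hh1] at hl2 hr2
      have hD1 : T2 - T1 ≤ 0 := by linarith
      have hD2 : -1 ≤ T2 - T1 := by linarith
      rcases eq_or_lt_of_le hx12.1 with hcase | hcase
      · have hx0 : (x₁ : ℝ) = (x₂ : ℝ) := by exact_mod_cast hcase
        have hE : ((y₁ : ℝ) - (y₂ : ℝ)) = T1 - T2 := by rw [hTsub, hx0]; ring
        have hyd : |((y₁ : ℝ) - (y₂ : ℝ))| ≤ 1 := by
          rw [abs_le]; constructor <;> linarith
        have hyZ : |y₁ - y₂| ≤ (1 : ℤ) := by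
          have : |((y₁ - y₂ : ℤ) : ℝ)| ≤ 1 := by push_cast; exact hyd
          exact_mod_cast this
        rw [Int.abs_eq_natAbs] at hyZ
        rw [Int.abs_eq_natAbs, Int.abs_eq_natAbs]
        omega
      · have hx21 : x₂ = x₁ + 1 := by omega
        have hh2' : (2 : ℤ) ≤ h := by omega
        have hHW2 : (2 : ℝ) ≤ (h : ℝ) * (w : ℝ) := by
          have : (2 : ℤ) ≤ h * w := by nlinarith
          exact_mod_cast this
        have he2 : e ≤ 1 / 2 := by
          rw [he]
          apply one_div_le_one_div_of_le <;> linarith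
        have hx0 : (x₂ : ℝ) = (x₁ : ℝ) + 1 := by exact_mod_cast hx21
        have hE : ((y₁ : ℝ) - (y₂ : ℝ)) = (T1 - T2) + e * (-1) := by rw [hTsub, hx0]; ring
        have hyd : |((y₁ : ℝ) - (y₂ : ℝ))| < 1 := by
          rw [abs_lt]; constructor <;> linarith
        have hyZ : y₁ = y₂ := by
          have : |((y₁ - y₂ : ℤ) : ℝ)| < 1 := by push_cast; exact hyd
          have h2 : |y₁ - y₂| < (1 : ℤ) := by exact_mod_cast this
          rw [Int.abs_eq_natAbs] at h2; omega
        rw [Int.abs_eq_natAbs, Int.abs_eq_natAbs]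
        omega
    · -- horizontal ∩ horizontal
      have hTT : T1 = T2 := by
        have := hh1.symm.trans hh2
        linarith
      have hxd : |((x₁ : ℝ) - (x₂ : ℝ))| ≤ (h : ℝ) - 1 := by
        rw [abs_le]
        constructor
        · have : (x₂ : ℝ) ≤ (h : ℝ) := by exact_mod_cast hx2b
          have h1 : (1 : ℝ) ≤ (x₁ : ℝ) := by exact_mod_cast hx1a
          linarith
        · have : (x₁ : ℝ) ≤ (h : ℝ) := by exact_mod_cast hx1b
          have h1 : (1 : ℝ) ≤ (x₂ : ℝ) := by exact_mod_cast hx2a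
          linarith
      have hyd : |((y₁ : ℝ) - (y₂ : ℝ))| < 1 := by
        have heq : ((y₁ : ℝ) - (y₂ : ℝ)) = e * ((x₁ : ℝ) - (x₂ : ℝ)) := by
          have := hTsub; rw [hTT] at this; linarith
        rw [heq, abs_mul, abs_of_pos he0]
        have : e * |((x₁ : ℝ) - (x₂ : ℝ))| ≤ e * ((h : ℝ) - 1) :=
          mul_le_mul_of_nonneg_left hxd he0.le
        nlinarith
      have hyZ : y₁ = y₂ := by
        have : |((y₁ - y₂ : ℤ) : ℝ)| < 1 := by push_cast; exact hyd
        have h2 : |y₁ - y₂| < (1 : ℤ) := by exact_mod_cast this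
        rw [Int.abs_eq_natAbs] at h2; omega
      have hxZ : x₁ = x₂ := by
        have hy0 : (y₁ : ℝ) = (y₂ : ℝ) := by exact_mod_cast hyZ
        have : e * ((x₁ : ℝ) - (x₂ : ℝ)) = 0 := by
          have h' := hTsub; rw [hTT, hy0] at h'; linarith
        have hx0 : ((x₁ : ℝ) - (x₂ : ℝ)) = 0 := by
          rcases mul_eq_zero.mp this with h' | h'
          · exact absurd h' (ne_of_gt he0)
          · exact h'
        have : (x₁ : ℝ) = (x₂ : ℝ) := by linarith
        exact_mod_cast this
      exact Or.inl ⟨hxZ, hyZ⟩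
  · rintro (⟨hx, hy⟩ | hadj)
    · subst hx; subst hy
      refine ⟨((x₁ : ℝ), T1), Or.inl ⟨rfl, ?_, ?_⟩, Or.inl ⟨rfl, ?_, ?_⟩⟩ <;>
        · show _ ≤ _
          rw [← hT1]
          try linarith
    · have hcases : (x₁ = x₂ ∧ (y₂ = y₁ + 1 ∨ y₁ = y₂ + 1)) ∨
          (y₁ = y₂ ∧ (x₂ = x₁ + 1 ∨ x₁ = x₂ + 1)) := by
        rw [Int.abs_eq_natAbs, Int.abs_eq_natAbs] at hadj
        omega
      rcases hcases with ⟨hx, hy | hy⟩ | ⟨hy, hx | hx⟩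
      · -- x₁ = x₂, y₂ = y₁ + 1 : T2 = T1 + 1
        have hT21 : T2 = T1 + 1 := by
          have hy0 : (y₂ : ℝ) = (y₁ : ℝ) + 1 := by exact_mod_cast hy
          have hx0 : (x₁ : ℝ) = (x₂ : ℝ) := by exact_mod_cast hx
          have h' := hTsub; rw [hy0, hx0] at h'; linarith
        refine ⟨((x₁ : ℝ), T1), Or.inl ⟨rfl, ?_, ?_⟩, Or.inl ⟨?_, ?_, ?_⟩⟩
        · show gridTop h w x₁ y₁ - 1 ≤ T1
          rw [← hT1]; linarith
        · show T1 ≤ gridTop h w x₁ y₁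
          rw [← hT1]
        · show (x₁ : ℝ) = (x₂ : ℝ)
          exact_mod_cast hx
        · show gridTop h w x₂ y₂ - 1 ≤ T1
          rw [← hT2]; linarith
        · show T1 ≤ gridTop h w x₂ y₂
          rw [← hT2]; linarith
      · -- x₁ = x₂, y₁ = y₂ + 1 : T1 = T2 + 1
        have hT12 : T1 = T2 + 1 := by
          have hy0 : (y₁ : ℝ) = (y₂ : ℝ) + 1 := by exact_mod_cast hy
          have hx0 : (x₁ : ℝ) = (x₂ : ℝ) := by exact_mod_cast hx
          have h' := hTsub; rw [hy0, hx0] at h'; linarith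
        refine ⟨((x₁ : ℝ), T2), Or.inl ⟨rfl, ?_, ?_⟩, Or.inl ⟨?_, ?_, ?_⟩⟩
        · show gridTop h w x₁ y₁ - 1 ≤ T2
          rw [← hT1]; linarith
        · show T2 ≤ gridTop h w x₁ y₁
          rw [← hT1]; linarith
        · show (x₁ : ℝ) = (x₂ : ℝ)
          exact_mod_cast hx
        · show gridTop h w x₂ y₂ - 1 ≤ T2
          rw [← hT2]; linarith
        · show T2 ≤ gridTop h w x₂ y₂
          rw [← hT2]
      · -- y₁ = y₂, x₂ = x₁ + 1 : T2 = T1 - e, point (x₂, T1 - 1)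
        have hx0 : (x₂ : ℝ) = (x₁ : ℝ) + 1 := by exact_mod_cast hx
        have hT21 : T2 = T1 - e := by
          have hy0 : (y₁ : ℝ) = (y₂ : ℝ) := by exact_mod_cast hy
          have h' := hTsub; rw [hy0, hx0] at h'; linarith
        refine ⟨((x₂ : ℝ), T1 - 1), Or.inr ⟨?_, ?_, ?_⟩, Or.inl ⟨rfl, ?_, ?_⟩⟩
        · show T1 - 1 = gridTop h w x₁ y₁ - 1
          rw [← hT1]
        · show (x₁ : ℝ) ≤ (x₂ : ℝ)
          linarith
        · show (x₂ : ℝ) ≤ (x₁ : ℝ) + 1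
          linarith
        · show gridTop h w x₂ y₂ - 1 ≤ T1 - 1
          rw [← hT2]; linarith
        · show T1 - 1 ≤ gridTop h w x₂ y₂
          rw [← hT2]; linarith
      · -- y₁ = y₂, x₁ = x₂ + 1 : T1 = T2 - e, point (x₁, T2 - 1)
        have hx0 : (x₁ : ℝ) = (x₂ : ℝ) + 1 := by exact_mod_cast hx
        have hT12 : T1 = T2 - e := by
          have hy0 : (y₁ : ℝ) = (y₂ : ℝ) := by exact_mod_cast hy
          have h' := hTsub; rw [hy0, hx0] at h'; linarith
        refine ⟨((x₁ : ℝ), T2 - 1), Or.inl ⟨rfl, ?_, ?_⟩, Or.inr ⟨?_, ?_, ?_⟩⟩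
        · show gridTop h w x₁ y₁ - 1 ≤ T2 - 1
          rw [← hT1]; linarith
        · show T2 - 1 ≤ gridTop h w x₁ y₁
          rw [← hT1]; linarith
        · show T2 - 1 = gridTop h w x₂ y₂ - 1
          rw [← hT2]
        · show (x₂ : ℝ) ≤ (x₁ : ℝ)
          linarith
        · show (x₁ : ℝ) ≤ (x₂ : ℝ) + 1
          linarith
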